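/- arXiv:2101.05246 — 2 statements merged into one kernel-verified Lean document; each statement's English description precedes it below -/
import Mathlib

section
/- Let E be an elliptic curve over an algebraically closed field and let h be an automorphism of E fixing the origin that also fixes a point P of exact order m ≥ 2 in the group law. If h is nontrivial and the characteristic does not divide the order of h, then m ≤ 3; moreover if m = 3 then h has order dividing 3 (h(P)=P with P of order 3 forces h to act trivially on P, so h is an order-3 automorphism when nontrivial). -/
open WeierstrassCurve
open Classical

namespace VCAux

variable {k : Type*} [Field k]

/-- x-coordinate map of the variable change on points. -/
def mx (C : VariableChange k) (x : k) : k := (↑C.u⁻¹ : k) ^ 2 * (x - C.r)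

/-- y-coordinate map of the variable change on points. -/
def my (C : VariableChange k) (x y : k) : k :=
  (↑C.u⁻¹ : k) ^ 3 * (y - C.s * x + C.r * C.s - C.t)

variable (W : WeierstrassCurve k) (C : VariableChange k)

lemma uinv_ne_zero : (↑C.u⁻¹ : k) ≠ 0 := (C.u⁻¹).ne_zero

lemma mx_injective {x₁ x₂ : k} (h : mx C x₁ = mx C x₂) : x₁ = x₂ := by
  have h2 := mul_left_cancel₀ (pow_ne_zero 2 (uinv_ne_zero C)) h
  linear_combination h2

lemma my_injective {x y₁ y₂ : k} (h : my C x y₁ = my C x y₂) : y₁ = y₂ := by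
  have h2 := mul_left_cancel₀ (pow_ne_zero 3 (uinv_ne_zero C)) h
  linear_combination h2

lemma equation_mx {x y : k} (h : W.toAffine.Equation x y) :
    (C • W).toAffine.Equation (mx C x) (my C x y) := by
  rw [WeierstrassCurve.Affine.equation_iff] at h ⊢
  simp only [mx, my, variableChange_a₁, variableChange_a₂, variableChange_a₃, variableChange_a₄,
    variableChange_a₆]
  linear_combination (↑C.u⁻¹ : k) ^ 6 * h

lemma negY_mx (x y : k) :
    (C • W).toAffine.negY (mx C x) (my C x y)
      = my C x (W.toAffine.negY x y) := by
  simp only [WeierstrassCurve.Affine.negY, mx, my, variableChange_a₁, variableChange_a₃]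
  ring

lemma addX_mx (x₁ x₂ L : k) :
    (C • W).toAffine.addX (mx C x₁) (mx C x₂) ((↑C.u⁻¹ : k) * (L - C.s))
      = mx C (W.toAffine.addX x₁ x₂ L) := by
  simp only [WeierstrassCurve.Affine.addX, mx, variableChange_a₁, variableChange_a₂]
  ring

lemma negAddY_mx (x₁ x₂ y₁ L : k) :
    (C • W).toAffine.negAddY (mx C x₁) (mx C x₂) (my C x₁ y₁)
        ((↑C.u⁻¹ : k) * (L - C.s))
      = my C (W.toAffine.addX x₁ x₂ L) (W.toAffine.negAddY x₁ x₂ y₁ L) := by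
  simp only [WeierstrassCurve.Affine.negAddY, WeierstrassCurve.Affine.addX, mx, my,
    variableChange_a₁, variableChange_a₂]
  ring

lemma addY_mx (x₁ x₂ y₁ L : k) :
    (C • W).toAffine.addY (mx C x₁) (mx C x₂) (my C x₁ y₁)
        ((↑C.u⁻¹ : k) * (L - C.s))
      = my C (W.toAffine.addX x₁ x₂ L) (W.toAffine.addY x₁ x₂ y₁ L) := by
  rw [WeierstrassCurve.Affine.addY, negAddY_mx, addX_mx, negY_mx,
    WeierstrassCurve.Affine.addY]

lemma slope_mx {x₁ x₂ y₁ y₂ : k} (h₁ : W.toAffine.Equation x₁ y₁)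
    (h₂ : W.toAffine.Equation x₂ y₂)
    (hxy : ¬(x₁ = x₂ ∧ y₁ = W.toAffine.negY x₂ y₂)) :
    (C • W).toAffine.slope (mx C x₁) (mx C x₂) (my C x₁ y₁) (my C x₂ y₂)
      = (↑C.u⁻¹ : k) * (W.toAffine.slope x₁ x₂ y₁ y₂ - C.s) := by
  by_cases hx : x₁ = x₂
  · have hy : y₁ ≠ W.toAffine.negY x₂ y₂ := fun h => hxy ⟨hx, h⟩
    have hy12 : y₁ = y₂ := W.toAffine.Y_eq_of_Y_ne h₁ h₂ hx hy
    subst hx; subst hy12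
    have hy' : my C x₁ y₁ ≠ (C • W).toAffine.negY (mx C x₁) (my C x₁ y₁) := by
      rw [negY_mx]
      exact fun h => hy (my_injective C h)
    have hden : y₁ - W.toAffine.negY x₁ y₁ ≠ 0 := sub_ne_zero.2 hy
    have hden' : my C x₁ y₁ - (C • W).toAffine.negY (mx C x₁) (my C x₁ y₁) ≠ 0 :=
      sub_ne_zero.2 hy'
    have hLden : W.toAffine.slope x₁ x₁ y₁ y₁ * (y₁ - W.toAffine.negY x₁ y₁)
        = 3 * x₁ ^ 2 + 2 * W.toAffine.a₂ * x₁ + W.toAffine.a₄ - W.toAffine.a₁ * y₁ := by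
      rw [W.toAffine.slope_of_Y_ne rfl hy, div_mul_cancel₀ _ hden]
    rw [WeierstrassCurve.Affine.slope_of_Y_ne rfl hy', div_eq_iff hden']
    rw [negY_mx]
    simp only [WeierstrassCurve.Affine.negY, mx, my, variableChange_a₁, variableChange_a₂,
      variableChange_a₃, variableChange_a₄] at hLden ⊢
    linear_combination -(↑C.u⁻¹ : k) ^ 4 * hLden
  · have hx' : mx C x₁ ≠ mx C x₂ := fun h => hx (mx_injective C h)
    have hden : x₁ - x₂ ≠ 0 := sub_ne_zero.2 hx
    have hden' : mx C x₁ - mx C x₂ ≠ 0 := sub_ne_zero.2 hx'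
    have hLden : W.toAffine.slope x₁ x₂ y₁ y₂ * (x₁ - x₂) = y₁ - y₂ := by
      rw [W.toAffine.slope_of_X_ne hx, div_mul_cancel₀ _ hden]
    rw [WeierstrassCurve.Affine.slope_of_X_ne hx', div_eq_iff hden']
    simp only [mx, my] at hLden ⊢
    linear_combination -(↑C.u⁻¹ : k) ^ 3 * hLden


section PointMap

variable (E : WeierstrassCurve k) [E.IsElliptic] (C : VariableChange k)

lemma nonsingular_mx (hE : C • E = E) {x y : k} (h : E.toAffine.Nonsingular x y) :
    E.toAffine.Nonsingular (mx C x) (my C x y) := by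
  have he := equation_mx E C ((E.toAffine.nonsingular_iff' x y).mp h).1
  rw [hE] at he
  exact WeierstrassCurve.Affine.equation_iff_nonsingular.mp he

open WeierstrassCurve.Affine in
/-- The map on points induced by the variable change. -/
noncomputable def ptMap (hE : C • E = E) :
    E.toAffine.Point → E.toAffine.Point
  | 0 => 0
  | .some _ _ h => .some _ _ (nonsingular_mx E C hE h)

lemma ptMap_zero (hE : C • E = E) : ptMap E C hE 0 = 0 := rfl

lemma ptMap_some (hE : C • E = E) {x y : k} (h : E.toAffine.Nonsingular x y) :
    ptMap E C hE (.some _ _ h) = .some _ _ (nonsingular_mx E C hE h) := rfl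

open WeierstrassCurve.Affine in
lemma ptMap_add (hE : C • E = E) (P Q : E.toAffine.Point) :
    ptMap E C hE (P + Q) = ptMap E C hE P + ptMap E C hE Q := by
  rcases P with _ | @⟨x₁, y₁, h₁⟩
  · rw [← Point.zero_def, zero_add, ptMap_zero, zero_add]
  rcases Q with _ | @⟨x₂, y₂, h₂⟩
  · rw [← Point.zero_def, add_zero, ptMap_zero, add_zero]
  by_cases hxy : x₁ = x₂ ∧ y₁ = E.toAffine.negY x₂ y₂
  · rw [Point.add_of_Y_eq hxy.1 hxy.2, ptMap_zero, ptMap_some, ptMap_some,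
      Point.add_of_Y_eq (congrArg (mx C) hxy.1)]
    rw [hxy.1, hxy.2]
    have hneg := negY_mx E C x₂ y₂
    rw [hE] at hneg
    exact hneg.symm
  · have hxy' : x₁ = x₂ → y₁ ≠ E.toAffine.negY x₂ y₂ := fun hx hy => hxy ⟨hx, hy⟩
    rw [Point.add_some hxy, ptMap_some, ptMap_some, ptMap_some, Point.add_some]
    · have e1 := ((E.toAffine.nonsingular_iff' x₁ y₁).mp h₁).1
      have e2 := ((E.toAffine.nonsingular_iff' x₂ y₂).mp h₂).1
      have hsl := slope_mx E C e1 e2 hxy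
      rw [hE] at hsl
      simp only [Point.some.injEq]
      constructor
      · have hX := addX_mx E C x₁ x₂ (E.toAffine.slope x₁ x₂ y₁ y₂)
        rw [hE] at hX
        rw [hsl]
        exact hX.symm
      · have hY := addY_mx E C x₁ x₂ y₁ (E.toAffine.slope x₁ x₂ y₁ y₂)
        rw [hE] at hY
        rw [hsl]
        exact hY.symm
    · rintro ⟨hx, hy⟩
      have hx12 := mx_injective C hx
      apply hxy' hx12
      subst hx12
      have hneg := negY_mx E C x₁ y₂
      rw [hE] at hneg
      rw [hneg] at hy
      exact my_injective C hy

lemma ptMap_nsmul (hE : C • E = E) (P : E.toAffine.Point) (hP : ptMap E C hE P = P) (n : ℕ) :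
    ptMap E C hE (n • P) = n • P := by
  induction n with
  | zero => simp [ptMap_zero]
  | succ n ih => rw [succ_nsmul, ptMap_add, ih, hP]

end PointMap


section Fix

variable (E : WeierstrassCurve k) [E.IsElliptic] (C : VariableChange k)

lemma fix_ptMap (hE : C • E = E) {x y : k} (hxy : E.toAffine.Nonsingular x y)
    (h1 : (C.u : k) ^ 2 * x + C.r = x)
    (h2 : (C.u : k) ^ 3 * y + (C.u : k) ^ 2 * C.s * x + C.t = y) :
    ptMap E C hE (.some _ _ hxy) = .some _ _ hxy := by
  have hmx : mx C x = x := by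
    rw [mx]
    linear_combination (-(↑C.u⁻¹ : k) ^ 2) * h1 + x * pow_mul_pow_eq_one 2 C.u.inv_mul
  have hmy : my C x y = y := by
    rw [my]
    linear_combination ((↑C.u⁻¹ : k) ^ 3 * C.s) * h1 - (↑C.u⁻¹ : k) ^ 3 * h2
      + y * pow_mul_pow_eq_one 3 C.u.inv_mul
  rw [ptMap_some]
  simp only [WeierstrassCurve.Affine.Point.some.injEq]
  exact ⟨hmx, hmy⟩

lemma fix_coords (hE : C • E = E) {a b : k} (hab : E.toAffine.Nonsingular a b)
    (h : ptMap E C hE (.some _ _ hab) = .some _ _ hab) :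
    mx C a = a ∧ my C a b = b := by
  rw [ptMap_some] at h
  simp only [WeierstrassCurve.Affine.Point.some.injEq] at h
  exact h

end Fix

lemma vc_mul_def (C C' : VariableChange k) : C * C' = {
    u := C.u * C'.u
    r := C.r * C'.u ^ 2 + C'.r
    s := C'.u * C.s + C'.s
    t := C.t * C'.u ^ 3 + C.r * C'.s * C'.u ^ 2 + C'.t } := rfl

lemma vc_one_def : (1 : VariableChange k) = ⟨1, 0, 0, 0⟩ := rfl

end VCAux

open Classical in
/-- Let `E` be an elliptic curve over an algebraically closed field and let `h` be a nontrivial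
automorphism of `E` fixing the origin (modelled as a variable change `φ ≠ 1` with
`E.variableChange φ = E`, acting on affine points by `(x, y) ↦ (u²x + r, u³y + u²sx + t)`)
that fixes an affine point `P = (x, y)` of exact order `m ≥ 2` in the group law.  If the
characteristic does not divide the order of `h`, then `m ≤ 3`; moreover if `m = 3` then `h`
has order dividing `3`. -/
theorem stmt6 {k : Type*} [Field k] [IsAlgClosed k]
    (E : WeierstrassCurve k) [E.IsElliptic]
    (φ : WeierstrassCurve.VariableChange k)
    (hφE : φ • E = E) (hφ1 : φ ≠ 1)
    (hcop : ∀ p : ℕ, p.Prime → p ∣ orderOf φ → (p : k) ≠ 0)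
    (x y : k) (hxy : E.toAffine.Nonsingular x y)
    (m : ℕ) (hm : 2 ≤ m)
    (hordP : addOrderOf (WeierstrassCurve.Affine.Point.some x y hxy) = m)
    (hfix : (φ.u : k) ^ 2 * x + φ.r = x ∧
      (φ.u : k) ^ 3 * y + (φ.u : k) ^ 2 * φ.s * x + φ.t = y) :
    m ≤ 3 ∧ (m = 3 → orderOf φ ∣ 3) := by
  classical
  obtain ⟨hfx, hfy⟩ := hfix
  set P : E.toAffine.Point := WeierstrassCurve.Affine.Point.some x y hxy with hP
  have hfixP : VCAux.ptMap E φ hφE P = P := VCAux.fix_ptMap E φ hφE hxy hfx hfy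
  have hfixn : ∀ n : ℕ, VCAux.ptMap E φ hφE (n • P) = n • P :=
    VCAux.ptMap_nsmul E φ hφE P hfixP
  have ea1 : (↑φ.u⁻¹ : k) * (E.a₁ + 2 * φ.s) = E.a₁ := by
    have h := congrArg WeierstrassCurve.a₁ hφE
    rwa [WeierstrassCurve.variableChange_a₁] at h
  have ea3 : (↑φ.u⁻¹ : k) ^ 3 * (E.a₃ + φ.r * E.a₁ + 2 * φ.t) = E.a₃ := by
    have h := congrArg WeierstrassCurve.a₃ hφE
    rwa [WeierstrassCurve.variableChange_a₃] at h
  by_cases hu2 : (φ.u : k) ^ 2 = 1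
  · -- r = 0
    have hr : φ.r = 0 := by linear_combination hfx - x * hu2
    by_cases hu1 : (φ.u : k) = 1
    · -- u = 1 : contradiction
      exfalso
      have huu : φ.u = 1 := Units.ext (by rw [Units.val_one]; exact hu1)
      have hs2 : (2 : k) * φ.s = 0 := by
        rw [huu, inv_one, Units.val_one] at ea1; linear_combination ea1
      have ht2 : (2 : k) * φ.t = 0 := by
        rw [huu, inv_one, Units.val_one, hr] at ea3; linear_combination ea3
      by_cases h2k : (2 : k) = 0
      · have hsq : φ * φ = 1 := by
          rw [VCAux.vc_mul_def, VCAux.vc_one_def]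
          refine WeierstrassCurve.VariableChange.ext ?_ ?_ ?_ ?_
          · show φ.u * φ.u = 1
            rw [huu, mul_one]
          · show φ.r * (↑φ.u : k) ^ 2 + φ.r = 0
            rw [hr]; ring
          · show (↑φ.u : k) * φ.s + φ.s = 0
            rw [hu1]; linear_combination hs2
          · show φ.t * (↑φ.u : k) ^ 3 + φ.r * φ.s * (↑φ.u : k) ^ 2 + φ.t = 0
            rw [hr, hu1]; linear_combination ht2
        have hord : orderOf φ = 2 := by
          have hd : orderOf φ ∣ 2 := orderOf_dvd_iff_pow_eq_one.mpr (by rw [pow_two]; exact hsq)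
          rcases (Nat.dvd_prime Nat.prime_two).mp hd with h | h
          · exact absurd (orderOf_eq_one_iff.mp h) hφ1
          · exact h
        exact hcop 2 Nat.prime_two (by rw [hord]) h2k
      · have hs0 : φ.s = 0 := (mul_eq_zero.mp hs2).resolve_left h2k
        have ht0 : φ.t = 0 := (mul_eq_zero.mp ht2).resolve_left h2k
        exact hφ1 (by
          rw [VCAux.vc_one_def]
          exact WeierstrassCurve.VariableChange.ext huu hr hs0 ht0)
    · -- u = -1
      have hum : (φ.u : k) = -1 := by
        have hfact : ((φ.u : k) - 1) * ((φ.u : k) + 1) = 0 := by linear_combination hu2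
        rcases mul_eq_zero.mp hfact with h | h
        · exact absurd (by linear_combination h) hu1
        · linear_combination h
      have h2k : (2 : k) ≠ 0 := fun h => hu1 (by rw [hum]; linear_combination -h)
      have hv : (↑φ.u⁻¹ : k) = -1 := by
        have hmm := φ.u.inv_mul
        rw [hum] at hmm
        linear_combination -hmm
      have hsa : φ.s = -E.a₁ := by
        rw [hv] at ea1
        have h2 : (2 : k) * (φ.s + E.a₁) = 0 := by linear_combination -ea1
        have h3 := (mul_eq_zero.mp h2).resolve_left h2k
        linear_combination h3
      have hta : φ.t = -E.a₃ := by
        rw [hv, hr] at ea3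
        have h2 : (2 : k) * (φ.t + E.a₃) = 0 := by linear_combination -ea3
        have h3 := (mul_eq_zero.mp h2).resolve_left h2k
        linear_combination h3
      have hyneg : y = E.toAffine.negY x y := by
        rw [WeierstrassCurve.Affine.negY]
        rw [hum, hsa, hta] at hfy
        linear_combination -hfy
      have h2P : P + P = 0 := WeierstrassCurve.Affine.Point.add_self_of_Y_eq hyneg
      have hm2 : m ∣ 2 := by
        rw [← hordP]
        apply addOrderOf_dvd_iff_nsmul_eq_zero.mpr
        rw [two_nsmul]
        exact h2P
      have hm2' : m = 2 := le_antisymm (Nat.le_of_dvd (by norm_num) hm2) hm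
      exact ⟨by omega, fun h3 => by omega⟩
  · -- u² ≠ 1
    have hxcoord : ∀ (a b : k) (hab : E.toAffine.Nonsingular a b),
        VCAux.ptMap E φ hφE (.some _ _ hab) = .some _ _ hab → (1 - (φ.u : k) ^ 2) * a = φ.r := by
      intro a b hab h
      obtain ⟨h1, -⟩ := VCAux.fix_coords E φ hφE hab h
      rw [VCAux.mx] at h1
      linear_combination (φ.u : k) ^ 2 * h1 - (a - φ.r) * pow_mul_pow_eq_one 2 φ.u.inv_mul
    have hne : (1 - (φ.u : k) ^ 2) ≠ 0 := fun h => hu2 (by linear_combination -h)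
    have hnz : ∀ n : ℕ, 0 < n → n < m → n • P ≠ 0 := by
      intro n hn hnm h0
      have hd := addOrderOf_dvd_iff_nsmul_eq_zero.mpr h0
      rw [hordP] at hd
      exact absurd (Nat.le_of_dvd hn hd) (by omega)
    have hdiff : ∀ i j : ℕ, i < j → j < m → j • P ≠ i • P := by
      intro i j hij hjm h
      have hadd : (j - i) • P + i • P = j • P := by
        rw [← add_nsmul, Nat.sub_add_cancel (le_of_lt hij)]
      rw [h] at hadd
      have h0 : (j - i) • P = 0 := by
        have := hadd.trans (zero_add (i • P)).symm
        exact add_right_cancel this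
      exact hnz (j - i) (by omega) (by omega) h0
    have hx1 : (1 - (φ.u : k) ^ 2) * x = φ.r := hxcoord x y hxy hfixP
    have hm3 : m ≤ 3 := by
      by_contra hgt
      push_neg at hgt
      rcases h2e : (2 : ℕ) • P with _ | @⟨x₂, y₂, hP2⟩
      · exact hnz 2 (by norm_num) (by omega) h2e
      rcases h3e : (3 : ℕ) • P with _ | @⟨x₃, y₃, hP3⟩
      · exact hnz 3 (by norm_num) (by omega) h3e
      have hf2 := hfixn 2; rw [h2e] at hf2
      have hf3 := hfixn 3; rw [h3e] at hf3
      have hx2 := hxcoord x₂ y₂ hP2 hf2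
      have hx3 := hxcoord x₃ y₃ hP3 hf3
      have hx21 : x₂ = x := mul_left_cancel₀ hne (hx2.trans hx1.symm)
      have hx31 : x₃ = x := mul_left_cancel₀ hne (hx3.trans hx1.symm)
      have e1 : E.toAffine.Equation x y := ((E.toAffine.nonsingular_iff' x y).mp hxy).1
      have e2 : E.toAffine.Equation x₂ y₂ := ((E.toAffine.nonsingular_iff' x₂ y₂).mp hP2).1
      have e3 : E.toAffine.Equation x₃ y₃ := ((E.toAffine.nonsingular_iff' x₃ y₃).mp hP3).1
      have hy2 : y₂ ≠ y := by
        intro h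
        apply hdiff 1 2 one_lt_two (by omega)
        rw [h2e, one_nsmul, hP]
        subst h; subst hx21
        rfl
      have hy3 : y₃ ≠ y := by
        intro h
        apply hdiff 1 3 (by norm_num) (by omega)
        rw [h3e, one_nsmul, hP]
        subst h; subst hx31
        rfl
      have hy32 : y₃ ≠ y₂ := by
        intro h
        apply hdiff 2 3 (by norm_num) (by omega)
        rw [h3e, h2e]
        subst h
        have hx32 : x₃ = x₂ := hx31.trans hx21.symm
        subst hx32
        rfl
      have q2 : y₂ = E.toAffine.negY x y :=
        (E.toAffine.Y_eq_of_X_eq e2 e1 hx21).resolve_left hy2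
      have q3 : y₃ = E.toAffine.negY x y :=
        (E.toAffine.Y_eq_of_X_eq e3 e1 hx31).resolve_left hy3
      exact hy32 (q3.trans q2.symm)
    refine ⟨hm3, fun hm3' => ?_⟩
    subst hm3'
    have h2nz : (2 : ℕ) • P ≠ 0 := hnz 2 (by norm_num) (by norm_num)
    have hyne : y ≠ E.toAffine.negY x y := by
      intro h
      apply h2nz
      rw [two_nsmul]
      exact WeierstrassCurve.Affine.Point.add_self_of_Y_eq h
    have h3z : (3 : ℕ) • P = 0 := by rw [← hordP]; exact addOrderOf_nsmul_eq_zero P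
    have h21 : (3 : ℕ) • P = (2 : ℕ) • P + P := by
      rw [show (3 : ℕ) = 2 + 1 by norm_num, succ_nsmul]
    have h2neg : (2 : ℕ) • P = -P := eq_neg_of_add_eq_zero_left (h21 ▸ h3z)
    have hfneg : VCAux.ptMap E φ hφE (-P) = -P := by rw [← h2neg]; exact hfixn 2
    have hnegP : -P = WeierstrassCurve.Affine.Point.some _ _
        ((WeierstrassCurve.Affine.nonsingular_neg x y).mpr hxy) := by
      rw [hP]
      exact WeierstrassCurve.Affine.Point.neg_some hxy
    rw [hnegP] at hfneg
    obtain ⟨-, hmyneg⟩ := VCAux.fix_coords E φ hφE _ hfneg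
    obtain ⟨-, hmy⟩ := VCAux.fix_coords E φ hφE hxy hfixP
    have hvdiff : ((↑φ.u⁻¹ : k) ^ 3 - 1) * (y - E.toAffine.negY x y) = 0 := by
      rw [VCAux.my] at hmy hmyneg
      linear_combination hmy - hmyneg
    have hv3 : (↑φ.u⁻¹ : k) ^ 3 = 1 := by
      rcases mul_eq_zero.mp hvdiff with h | h
      · linear_combination h
      · exact absurd (by linear_combination h : y = E.toAffine.negY x y) hyne
    have hu3 : (φ.u : k) ^ 3 = 1 := by
      linear_combination pow_mul_pow_eq_one 3 φ.u.inv_mul - (φ.u : k) ^ 3 * hv3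
    have hune : (φ.u : k) ≠ 1 := fun h => hu2 (by rw [h]; norm_num)
    have husum : (φ.u : k) ^ 2 + (φ.u : k) + 1 = 0 := by
      have hfact : ((φ.u : k) - 1) * ((φ.u : k) ^ 2 + (φ.u : k) + 1) = 0 := by
        linear_combination hu3
      exact (mul_eq_zero.mp hfact).resolve_left (sub_ne_zero.mpr hune)
    have h3eq : φ ^ 3 = (φ * φ) * φ := by
      rw [pow_succ, pow_two]
    have hψu : ((φ ^ 3).u : k) = 1 := by
      rw [h3eq]
      show (((φ.u * φ.u) * φ.u : kˣ) : k) = 1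
      rw [Units.val_mul, Units.val_mul]
      linear_combination hu3
    have hψuu : (φ ^ 3).u = 1 := Units.ext (by rw [Units.val_one]; exact hψu)
    have hψr : (φ ^ 3).r = 0 := by
      rw [h3eq]
      show (φ.r * (↑φ.u : k) ^ 2 + φ.r) * (↑φ.u : k) ^ 2 + φ.r = 0
      linear_combination φ.r * (φ.u : k) * hu3 + φ.r * husum
    have hψs : (φ ^ 3).s = 0 := by
      rw [h3eq]
      show (↑φ.u : k) * ((↑φ.u : k) * φ.s + φ.s) + φ.s = 0
      linear_combination φ.s * husum
    have hψE : (φ ^ 3) • E = E := by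
      have hstep : ∀ C C' : WeierstrassCurve.VariableChange k, C • E = E →
          C' • E = E → (C * C') • E = E := by
        intro C C' h h'
        rw [mul_smul, h', h]
      rw [h3eq]
      exact hstep _ _ (hstep _ _ hφE hφE) hφE
    have eb3 : (↑(φ ^ 3).u⁻¹ : k) ^ 3 * (E.a₃ + (φ ^ 3).r * E.a₁ + 2 * (φ ^ 3).t) = E.a₃ := by
      have h := congrArg WeierstrassCurve.a₃ hψE
      rwa [WeierstrassCurve.variableChange_a₃] at h
    rw [hψuu, hψr, inv_one, Units.val_one] at eb3
    have h2t : (2 : k) * (φ ^ 3).t = 0 := by linear_combination eb3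
    by_cases ht0 : (φ ^ 3).t = 0
    · apply orderOf_dvd_iff_pow_eq_one.mpr
      rw [VCAux.vc_one_def]
      exact WeierstrassCurve.VariableChange.ext hψuu hψr hψs ht0
    · exfalso
      have hne1 : φ ^ 3 ≠ 1 := fun h => ht0 (by rw [h]; rfl)
      have hsq : (φ ^ 3) * (φ ^ 3) = 1 := by
        rw [VCAux.vc_mul_def, VCAux.vc_one_def]
        refine WeierstrassCurve.VariableChange.ext ?_ ?_ ?_ ?_
        · show (φ ^ 3).u * (φ ^ 3).u = 1
          rw [hψuu, mul_one]
        · show (φ ^ 3).r * (↑(φ ^ 3).u : k) ^ 2 + (φ ^ 3).r = 0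
          rw [hψr]; ring
        · show (↑(φ ^ 3).u : k) * (φ ^ 3).s + (φ ^ 3).s = 0
          rw [hψs]; ring
        · show (φ ^ 3).t * (↑(φ ^ 3).u : k) ^ 3 + (φ ^ 3).r * (φ ^ 3).s * (↑(φ ^ 3).u : k) ^ 2
            + (φ ^ 3).t = 0
          rw [hψr, hψuu, Units.val_one]
          linear_combination h2t
      have h6 : φ ^ 6 = 1 := by
        rw [show (6 : ℕ) = 3 + 3 by norm_num, pow_add]
        exact hsq
      have hd6 : orderOf φ ∣ 6 := orderOf_dvd_iff_pow_eq_one.mpr h6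
      have hd3 : ¬orderOf φ ∣ 3 := fun h => hne1 (orderOf_dvd_iff_pow_eq_one.mp h)
      have h2d : 2 ∣ orderOf φ := by
        have h0 : orderOf φ ≠ 0 := by
          intro h
          rw [h] at hd6
          norm_num at hd6
        have hle : orderOf φ ≤ 6 := Nat.le_of_dvd (by norm_num) hd6
        have hpos : 1 ≤ orderOf φ := Nat.one_le_iff_ne_zero.mpr h0
        interval_cases h : (orderOf φ) <;> omega
      have h2ne := hcop 2 Nat.prime_two h2d
      exact ht0 ((mul_eq_zero.mp h2t).resolve_left h2ne)
end

section
/- Let L = I^{1,9} with basis e_0,...,e_9 as above and f = -3e_0 + e_1 + ... + e_9. Then the quotient lattice f^⊥ / Zf is an even negative-definite unimodular lattice of rank 8 (hence isomorphic to E_8 with negative definite form). -/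
/-- The symmetric bilinear form of the odd unimodular lattice `I^{1,9}`. -/
def I19 (x y : Fin 10 → ℤ) : ℤ :=
  x 0 * y 0 - ∑ i : Fin 9, x i.succ * y i.succ

/-- The vector `f = -3e₀ + e₁ + ⋯ + e₉` in `I^{1,9}`. -/
def fI19 : Fin 10 → ℤ :=
  (-3 : ℤ) • Pi.single 0 1 + ∑ i : Fin 9, Pi.single i.succ (1 : ℤ)

/-- Pairing with `f`, as a linear functional; its kernel is `f^⊥`. -/
def pairf : (Fin 10 → ℤ) →ₗ[ℤ] ℤ where
  toFun x := I19 x fI19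
  map_add' x y := by
    simp only [I19, Pi.add_apply, add_mul, Finset.sum_add_distrib]
    ring
  map_smul' c x := by
    simp only [I19, Pi.smul_apply, smul_eq_mul, RingHom.id_apply, mul_assoc,
      Finset.mul_sum, mul_sub]

lemma fI19_zero : fI19 0 = -3 := by
  simp only [fI19, Pi.add_apply, Pi.smul_apply, Finset.sum_apply, smul_eq_mul,
    Pi.single_eq_same]
  have hz : ∑ c : Fin 9, (Pi.single c.succ (1 : ℤ) : Fin 10 → ℤ) 0 = 0 :=
    Finset.sum_eq_zero fun i _ => Pi.single_eq_of_ne (Fin.succ_ne_zero i).symm _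
  rw [hz]; ring

lemma fI19_succ (j : Fin 9) : fI19 j.succ = 1 := by
  simp only [fI19, Pi.add_apply, Pi.smul_apply, Finset.sum_apply, smul_eq_mul]
  rw [Pi.single_eq_of_ne (Fin.succ_ne_zero j), Finset.sum_eq_single j]
  · simp
  · intro b _ hb
    exact Pi.single_eq_of_ne (fun h => hb (Fin.succ_injective _ h).symm) _
  · simp

lemma pair_fI19 (x : Fin 10 → ℤ) : I19 x fI19 = -3 * x 0 - ∑ i : Fin 9, x i.succ := by
  simp only [I19, fI19_zero, fI19_succ, mul_one, mul_neg]
  ring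

/-- In `I^{1,9}` with `f = -3e₀ + e₁ + ⋯ + e₉`, the quotient lattice `f^⊥/ℤf` is an even
negative-definite unimodular lattice of rank `8` (hence isomorphic to `E₈` with negative
definite form): the form is even on `f^⊥`, it is negative on `f^⊥` away from `ℤf` (and zero
exactly on `ℤf`), `f^⊥` has rank `9` (so the quotient has rank `8`), and every linear
functional on `f^⊥` vanishing on `f` is represented by pairing with an element of `f^⊥`
(unimodularity of the quotient). -/
theorem stmt9 :
    (∀ x : Fin 10 → ℤ, I19 x fI19 = 0 → Even (I19 x x)) ∧
    (∀ x : Fin 10 → ℤ, I19 x fI19 = 0 →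
      I19 x x ≤ 0 ∧ (I19 x x = 0 ↔ ∃ n : ℤ, x = n • fI19)) ∧
    Module.finrank ℤ (LinearMap.ker pairf) = 9 ∧
    (∀ φ : (Fin 10 → ℤ) →ₗ[ℤ] ℤ, φ fI19 = 0 →
      ∃ y : Fin 10 → ℤ, I19 y fI19 = 0 ∧
        ∀ x : Fin 10 → ℤ, I19 x fI19 = 0 → φ x = I19 x y) := by
  refine ⟨?_, ?_, ?_, ?_⟩
  · -- evenness
    intro x hx
    rw [pair_fI19] at hx
    have hs : ∑ i : Fin 9, x i.succ = -3 * x 0 := by linarith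
    have key : I19 x x =
        (x 0 * x 0 - x 0) - ∑ i : Fin 9, (x i.succ * x i.succ - x i.succ) + 4 * x 0 := by
      rw [I19, Finset.sum_sub_distrib, hs]
      linarith
    rw [key]
    have h1 : Even (x 0 * x 0 - x 0) := by
      have : x 0 * x 0 - x 0 = (x 0 - 1) * ((x 0 - 1) + 1) := by ring
      rw [this]; exact Int.even_mul_succ_self _
    have h2 : Even (∑ i : Fin 9, (x i.succ * x i.succ - x i.succ)) := by
      rw [even_iff_two_dvd]
      refine Finset.dvd_sum fun i _ => ?_
      rw [← even_iff_two_dvd]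
      have : x i.succ * x i.succ - x i.succ = (x i.succ - 1) * ((x i.succ - 1) + 1) := by ring
      rw [this]; exact Int.even_mul_succ_self _
    have h3 : Even ((4 : ℤ) * x 0) := ⟨2 * x 0, by ring⟩
    exact (h1.sub h2).add h3
  · -- negativity
    intro x hx
    rw [pair_fI19] at hx
    have hs : ∑ i : Fin 9, x i.succ = -3 * x 0 := by linarith
    have key : 9 * I19 x x = -∑ i : Fin 9, (3 * x i.succ + x 0) ^ 2 := by
      have expand : ∀ i : Fin 9, i ∈ Finset.univ → (3 * x i.succ + x 0) ^ 2 =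
          9 * (x i.succ * x i.succ) + (6 * x 0) * x i.succ + x 0 ^ 2 := by
        intro i _; ring
      rw [I19, Finset.sum_congr rfl expand, Finset.sum_add_distrib, Finset.sum_add_distrib,
        ← Finset.mul_sum, ← Finset.mul_sum, hs, Finset.sum_const]
      simp only [Finset.card_univ, Fintype.card_fin, nsmul_eq_mul]
      ring
    have hnn : 0 ≤ ∑ i : Fin 9, (3 * x i.succ + x 0) ^ 2 :=
      Finset.sum_nonneg fun i _ => sq_nonneg _
    constructor
    · nlinarith
    constructor
    · intro h0
      have hz : ∑ i : Fin 9, (3 * x i.succ + x 0) ^ 2 = 0 := by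
        rw [h0] at key; linarith
      have hall : ∀ i : Fin 9, 3 * x i.succ + x 0 = 0 := by
        intro i
        have h := (Finset.sum_eq_zero_iff_of_nonneg (fun i _ => sq_nonneg _)).mp hz i
          (Finset.mem_univ i)
        exact (pow_eq_zero_iff two_ne_zero).mp h
      refine ⟨x (0 : Fin 9).succ, ?_⟩
      set n := x (0 : Fin 9).succ with hn
      have hx0 : x 0 = -3 * n := by have := hall 0; rw [← hn] at this; linarith
      funext j
      refine Fin.cases ?_ ?_ j
      · simp only [Pi.smul_apply, fI19_zero, smul_eq_mul, hx0]; ring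
      · intro i
        have hi := hall i
        have : x i.succ = n := by linarith
        simp [Pi.smul_apply, fI19_succ, this]
    · rintro ⟨n, rfl⟩
      simp only [I19, Pi.smul_apply, fI19_zero, fI19_succ, smul_eq_mul, mul_one]
      rw [Finset.sum_const]
      simp only [Finset.card_univ, Fintype.card_fin, nsmul_eq_mul]
      ring
  · -- rank of the kernel
    have hsurj : Function.Surjective pairf := by
      intro n
      refine ⟨n • (-Pi.single (0 : Fin 9).succ (1 : ℤ)), ?_⟩
      have h1 : pairf (-Pi.single (0 : Fin 9).succ (1 : ℤ)) = 1 := by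
        show I19 _ fI19 = 1
        rw [pair_fI19]
        simp only [Pi.neg_apply]
        rw [Pi.single_eq_of_ne (Fin.succ_ne_zero (0 : Fin 9)).symm,
          Finset.sum_eq_single (0 : Fin 9)]
        · simp
        · intro b _ hb
          rw [Pi.single_eq_of_ne (fun h => hb (Fin.succ_injective _ h))]
          simp
        · simp
      rw [map_smul, h1]
      simp
    have hrank := LinearMap.rank_range_add_rank_ker pairf
    rw [rank_range_of_surjective _ hsurj, Module.rank_self] at hrank
    have hfun : Module.rank ℤ (Fin 10 → ℤ) = 10 := by
      rw [rank_fun']; simp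
    rw [hfun] at hrank
    have hfin : Module.rank ℤ (LinearMap.ker pairf) < Cardinal.aleph0 := by
      have h := Submodule.rank_le (LinearMap.ker pairf)
      rw [hfun] at h
      exact lt_of_le_of_lt h (Cardinal.nat_lt_aleph0 10)
    obtain ⟨m, hm⟩ := Cardinal.lt_aleph0.mp hfin
    have hm9 : m = 9 := by
      rw [hm] at hrank
      have h10 : ((1 + m : ℕ) : Cardinal) = ((10 : ℕ) : Cardinal) := by
        push_cast
        simpa using hrank
      have := Nat.cast_inj.mp h10
      omega
    exact Module.finrank_eq_of_rank_eq (by rw [hm, hm9])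
  · -- unimodularity
    intro φ hf
    set y : Fin 10 → ℤ := fun j => if j = 0 then φ (Pi.single 0 1) else -φ (Pi.single j 1)
      with hy
    have hy0 : y 0 = φ (Pi.single 0 1) := by simp [hy]
    have hys : ∀ j : Fin 9, y j.succ = -φ (Pi.single j.succ 1) := by
      intro j; simp [hy, Fin.succ_ne_zero j]
    have hexp : ∀ x : Fin 10 → ℤ, φ x = x 0 * φ (Pi.single 0 1) +
        ∑ i : Fin 9, x i.succ * φ (Pi.single i.succ 1) := by
      intro x
      have hxsum : x = ∑ j : Fin 10, x j • Pi.single j (1 : ℤ) := by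
        funext k
        simp [Finset.sum_apply, Pi.single_apply, Finset.sum_ite_eq', mul_comm]
      calc φ x = φ (∑ j : Fin 10, x j • Pi.single j (1 : ℤ)) := by rw [← hxsum]
        _ = ∑ j : Fin 10, x j * φ (Pi.single j (1 : ℤ)) := by
            rw [map_sum]
            exact Finset.sum_congr rfl fun j _ => by rw [map_smul, smul_eq_mul]
        _ = x 0 * φ (Pi.single 0 1) + ∑ i : Fin 9, x i.succ * φ (Pi.single i.succ 1) := by
            rw [Fin.sum_univ_succ]
    have hIy : ∀ x : Fin 10 → ℤ, I19 x y = φ x := by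
      intro x
      rw [I19, hexp x, hy0]
      have hterm : ∀ i : Fin 9, i ∈ Finset.univ →
          x i.succ * y i.succ = -(x i.succ * φ (Pi.single i.succ 1)) := by
        intro i _; rw [hys i]; ring
      rw [Finset.sum_congr rfl hterm, Finset.sum_neg_distrib]
      ring
    refine ⟨y, ?_, fun x _ => (hIy x).symm⟩
    have hsym : I19 y fI19 = I19 fI19 y := by
      rw [I19, I19]
      congr 1
      · ring
      · exact Finset.sum_congr rfl fun i _ => by ring
    rw [hsym, hIy fI19, hf]
end
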